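/- Let φ₁, φ₂, φ₃ be nonzero vectors in ℝ² such that ⟨φ₁, φ₃⟩ < 0 and ⟨φ₁, φ₂⟩·⟨φ₂, φ₃⟩ > 0. Then {φ₁, φ₂, φ₃} is scalable: there exist positive scalars c₁, c₂, c₃ such that {c₁φ₁, c₂φ₂, c₃φ₃} is a Parseval frame, i.e. Σ_{i=1}^3 ⟨φ, c_iφ_i⟩ c_iφ_i = φ for all φ ∈ ℝ². -/

import Mathlib

open scoped RealInnerProductSpace

private lemma inner_two (x y : EuclideanSpace ℝ (Fin 2)) :
    ⟪x, y⟫ = x 0 * y 0 + x 1 * y 1 := by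
  simp [PiLp.inner_apply, Fin.sum_univ_two, RCLike.inner_apply]
  ring

private lemma aux_weights (a1 b1 a2 b2 a3 b3 : ℝ)
    (h1p : 0 < a1 ^ 2 + b1 ^ 2) (h2p : 0 < a2 ^ 2 + b2 ^ 2) (h3p : 0 < a3 ^ 2 + b3 ^ 2)
    (h13 : a1 * a3 + b1 * b3 < 0)
    (h123 : 0 < (a1 * a2 + b1 * b2) * (a2 * a3 + b2 * b3)) :
    ∃ w1 w2 w3 : ℝ, 0 < w1 ∧ 0 < w2 ∧ 0 < w3 ∧
      w1 * a1 ^ 2 + w2 * a2 ^ 2 + w3 * a3 ^ 2 = 1 ∧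
      w1 * b1 ^ 2 + w2 * b2 ^ 2 + w3 * b3 ^ 2 = 1 ∧
      w1 * (a1 * b1) + w2 * (a2 * b2) + w3 * (a3 * b3) = 0 := by
  have h13' : 0 < -(a1 * a3 + b1 * b3) := by linarith
  have hP1 : 0 < (a2 * a3 + b2 * b3) * ((a1 * b2 - a2 * b1) * (a1 * b3 - a3 * b1)) := by
    nlinarith [mul_pos h123 h13', mul_nonneg (sq_nonneg (a2 * a3 + b2 * b3)) (sq_nonneg a1),
      mul_nonneg (sq_nonneg (a2 * a3 + b2 * b3)) (sq_nonneg b1)]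
  have hP2 : 0 < -(a1 * a3 + b1 * b3) * ((a1 * b2 - a2 * b1) * (a2 * b3 - a3 * b2)) := by
    nlinarith [mul_pos h2p h13', h123]
  have hP3 : 0 < (a1 * a2 + b1 * b2) * ((a1 * b3 - a3 * b1) * (a2 * b3 - a3 * b2)) := by
    nlinarith [mul_pos h123 h13', mul_nonneg (sq_nonneg (a1 * a2 + b1 * b2)) (sq_nonneg a3),
      mul_nonneg (sq_nonneg (a1 * a2 + b1 * b2)) (sq_nonneg b3)]
  have hn1 : (a1 * b2 - a2 * b1) * (a1 * b3 - a3 * b1) ≠ 0 := by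
    intro h; rw [h] at hP1; simp at hP1
  have hn2 : (a1 * b2 - a2 * b1) * (a2 * b3 - a3 * b2) ≠ 0 := by
    intro h; rw [h] at hP2; simp at hP2
  have hn3 : (a1 * b3 - a3 * b1) * (a2 * b3 - a3 * b2) ≠ 0 := by
    intro h; rw [h] at hP3; simp at hP3
  have hd12 : a1 * b2 - a2 * b1 ≠ 0 := fun h => hn1 (by rw [h, zero_mul])
  have hd13 : a1 * b3 - a3 * b1 ≠ 0 := fun h => hn3 (by rw [h, zero_mul])
  have hd23 : a2 * b3 - a3 * b2 ≠ 0 := fun h => hn2 (by rw [h, mul_zero])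
  have hq1 : 0 < ((a1 * b2 - a2 * b1) * (a1 * b3 - a3 * b1)) ^ 2 :=
    lt_of_le_of_ne (sq_nonneg _) (Ne.symm (pow_ne_zero 2 hn1))
  have hq2 : 0 < ((a1 * b2 - a2 * b1) * (a2 * b3 - a3 * b2)) ^ 2 :=
    lt_of_le_of_ne (sq_nonneg _) (Ne.symm (pow_ne_zero 2 hn2))
  have hq3 : 0 < ((a1 * b3 - a3 * b1) * (a2 * b3 - a3 * b2)) ^ 2 :=
    lt_of_le_of_ne (sq_nonneg _) (Ne.symm (pow_ne_zero 2 hn3))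
  refine ⟨_, _, _, div_pos hP1 hq1, div_pos hP2 hq2, div_pos hP3 hq3, ?_, ?_, ?_⟩ <;>
    · rw [div_mul_eq_mul_div, div_mul_eq_mul_div, div_mul_eq_mul_div,
        div_add_div _ _ hq1.ne' hq2.ne', div_add_div _ _ (mul_ne_zero hq1.ne' hq2.ne') hq3.ne',
        div_eq_iff (mul_ne_zero (mul_ne_zero hq1.ne' hq2.ne') hq3.ne')]
      ring

/-- Three nonzero vectors in ℝ² with ⟪φ₁, φ₃⟫ < 0 and ⟪φ₁, φ₂⟫⟪φ₂, φ₃⟫ > 0 (i.e. not lying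
in a quadrant up to signs) are scalable: some positive scalars make them a Parseval frame. -/
theorem stmt_11 (φ₁ φ₂ φ₃ : EuclideanSpace ℝ (Fin 2))
    (h₁ : φ₁ ≠ 0) (h₂ : φ₂ ≠ 0) (h₃ : φ₃ ≠ 0)
    (h13 : ⟪φ₁, φ₃⟫ < 0) (h123 : 0 < ⟪φ₁, φ₂⟫ * ⟪φ₂, φ₃⟫) :
    ∃ c₁ c₂ c₃ : ℝ, 0 < c₁ ∧ 0 < c₂ ∧ 0 < c₃ ∧
      ∀ φ : EuclideanSpace ℝ (Fin 2),
        ⟪φ, c₁ • φ₁⟫ • (c₁ • φ₁) + ⟪φ, c₂ • φ₂⟫ • (c₂ • φ₂) + ⟪φ, c₃ • φ₃⟫ • (c₃ • φ₃)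
          = φ := by
  have hz : ∀ x : EuclideanSpace ℝ (Fin 2), x ≠ 0 → 0 < x 0 ^ 2 + x 1 ^ 2 := by
    intro x hx
    rcases eq_or_ne (x 0) 0 with h0 | h0
    · rcases eq_or_ne (x 1) 0 with h1 | h1
      · exact absurd (by ext i; fin_cases i <;> simp [h0, h1]) hx
      · positivity
    · positivity
  rw [inner_two] at h13
  rw [inner_two, inner_two] at h123
  obtain ⟨w1, w2, w3, hw1, hw2, hw3, E1, E2, E3⟩ :=
    aux_weights (φ₁ 0) (φ₁ 1) (φ₂ 0) (φ₂ 1) (φ₃ 0) (φ₃ 1)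
      (hz φ₁ h₁) (hz φ₂ h₂) (hz φ₃ h₃) h13 h123
  refine ⟨Real.sqrt w1, Real.sqrt w2, Real.sqrt w3, Real.sqrt_pos.mpr hw1,
    Real.sqrt_pos.mpr hw2, Real.sqrt_pos.mpr hw3, fun φ => ?_⟩
  have key : ∀ (c : ℝ) (ψ : EuclideanSpace ℝ (Fin 2)),
      ⟪φ, c • ψ⟫ • (c • ψ) = (c ^ 2 * ⟪φ, ψ⟫) • ψ := by
    intro c ψ
    rw [real_inner_smul_right, smul_smul]
    ring_nf
  rw [key, key, key, Real.sq_sqrt hw1.le, Real.sq_sqrt hw2.le, Real.sq_sqrt hw3.le]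
  ext i
  fin_cases i <;>
    simp only [PiLp.add_apply, PiLp.smul_apply, smul_eq_mul, inner_two, Fin.isValue,
      Fin.zero_eta, Fin.mk_one]
  · linear_combination (φ 0) * E1 + (φ 1) * E3
  · linear_combination (φ 1) * E2 + (φ 0) * E3
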